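/- Let p be a prime and v_p(n) the p-adic valuation of n. Given an A-derivation D : R → R, the map D̃_p : F(ℕ*,R) → F(ℕ*,R) defined by D̃_p(α)(n) = D(α(n)) + α(np)·v_p(np) is an A-derivation of the Dirichlet convolution ring F(ℕ*,R). -/

import Mathlib

/-- Type synonym: functions from `Γ` to `R` (to carry the Dirichlet-convolution
ring structure, distinct from the pointwise one). -/
def DirF (Γ R : Type*) : Type _ := Γ → R

/-- `Γ` is a monoid of finite type: every element has finitely many factorizations. -/
def FiniteMulType (Γ : Type*) [Mul Γ] : Prop :=
  ∀ n : Γ, {p : Γ × Γ | p.1 * p.2 = n}.Finite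

/-- Dirichlet convolution. -/
noncomputable def dconv {Γ R : Type*} [Mul Γ] [NonUnitalNonAssocSemiring R]
    (α β : DirF Γ R) : DirF Γ R :=
  fun n => ∑ᶠ p ∈ {p : Γ × Γ | p.1 * p.2 = n}, α p.1 * β p.2

/-- A ring structure on `DirF Γ R` is *the* Dirichlet convolution ring structure if addition is
pointwise, multiplication is Dirichlet convolution, and the unity is `e` (`e 1 = 1`, `e n = 0`
for `n ≠ 1`). -/
def IsDirichletRing {Γ R : Type*} [Monoid Γ] [Ring R] (inst : Ring (DirF Γ R)) : Prop := by
  letI := inst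
  exact (∀ α β : DirF Γ R, ∀ n : Γ, (α + β) n = α n + β n) ∧
    (∀ α β : DirF Γ R, α * β = dconv α β) ∧
    ((1 : DirF Γ R) 1 = 1 ∧ ∀ n : Γ, n ≠ 1 → (1 : DirF Γ R) n = 0)

lemma factFin (n : ℕ+) : {q : ℕ+ × ℕ+ | q.1 * q.2 = n}.Finite := by
  apply Set.Finite.subset (Set.finite_Iic n |>.prod (Set.finite_Iic n))
  rintro ⟨a, b⟩ h
  simp only [Set.mem_setOf_eq] at h
  exact ⟨PNat.le_of_dvd ⟨b, h.symm⟩, PNat.le_of_dvd ⟨a, by rw [← h, mul_comm]⟩⟩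

lemma dconv_eq {R : Type*} [CommRing R] (α β : DirF ℕ+ R) (n : ℕ+) :
    dconv α β n = ∑ q ∈ (factFin n).toFinset, α q.1 * β q.2 := by
  rw [dconv, ← finsum_mem_coe_finset]
  exact finsum_mem_congr ((factFin n).coe_toFinset).symm (fun _ _ => rfl)

lemma mem_factFin {n : ℕ+} {q : ℕ+ × ℕ+} :
    q ∈ (factFin n).toFinset ↔ q.1 * q.2 = n := by
  simp [Set.Finite.mem_toFinset]

/-- Given a prime `p` and an `A`-derivation `D : R → R`, the map
`D̃_p(α)(n) = D(α(n)) + v_p(np)·α(np)` is an `A`-derivation of the Dirichlet convolution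
ring `F(ℕ*,R)`: additive, `A`-linear, and Leibniz for Dirichlet convolution. -/
theorem stmt14 {A R : Type*} [CommRing A] [IsDomain A] [CommRing R] [Algebra A R]
    (D : R → R)
    (hDadd : ∀ r s : R, D (r + s) = D r + D s)
    (hDlin : ∀ (a : A) (r : R), D (a • r) = a • D r)
    (hDleib : ∀ r s : R, D (r * s) = r * D s + s * D r)
    (p : ℕ+) (hp : (p : ℕ).Prime) :
    ∀ Dt : DirF ℕ+ R → DirF ℕ+ R,
      (Dt = fun α => fun n => D (α n) + padicValNat p ((n * p : ℕ+) : ℕ) • α (n * p)) →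
      (∀ α β : DirF ℕ+ R, Dt (fun n => α n + β n) = fun n => Dt α n + Dt β n) ∧
      (∀ (a : A) (α : DirF ℕ+ R), Dt (fun n => a • α n) = fun n => a • Dt α n) ∧
      (∀ α β : DirF ℕ+ R,
        Dt (dconv α β) = fun n => dconv (Dt α) β n + dconv α (Dt β) n) := by
  intro Dt hDt
  haveI : Fact (p : ℕ).Prime := ⟨hp⟩
  subst hDt
  refine ⟨?_, ?_, ?_⟩
  · intro α β
    funext n
    beta_reduce
    simp only [hDadd, smul_add]
    ring
  · intro a α
    funext n
    beta_reduce
    simp only [hDlin, smul_add]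
    congr 1
    exact smul_comm _ a _
  · intro α β
    funext n
    beta_reduce
    set v := padicValNat p ((n * p : ℕ+) : ℕ) with hv
    -- the AddMonoidHom version of D
    let D' : R →+ R := AddMonoidHom.mk' D hDadd
    have hD' : ∀ r, D' r = D r := fun r => rfl
    rw [dconv_eq α β n, dconv_eq α β (n * p)]
    rw [dconv_eq (fun m => D (α m) + padicValNat p ((m * p : ℕ+) : ℕ) • α (m * p)) β n,
      dconv_eq α (fun m => D (β m) + padicValNat p ((m * p : ℕ+) : ℕ) • β (m * p)) n]
    rw [← hD', map_sum, Finset.smul_sum]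
    -- key identities
    have key1 : ∑ q ∈ (factFin n).toFinset,
        ((padicValNat p ((q.1 * p : ℕ+) : ℕ)) • α (q.1 * p)) * β q.2
        = ∑ q ∈ (factFin (n * p)).toFinset,
        (padicValNat p ((q.1 : ℕ+) : ℕ)) • (α q.1 * β q.2) := by
      refine Finset.sum_bij_ne_zero (fun q _ _ => (q.1 * p, q.2)) ?_ ?_ ?_ ?_
      · rintro ⟨a, b⟩ h1 h2
        rw [mem_factFin] at h1 ⊢
        simp only at h1 ⊢
        rw [mul_right_comm, h1]
      · rintro ⟨a1, b1⟩ _ _ ⟨a2, b2⟩ _ _ h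
        simp only [Prod.mk.injEq] at h ⊢
        exact ⟨mul_right_cancel h.1, h.2⟩
      · rintro ⟨c, d⟩ hct hg
        rw [mem_factFin] at hct
        simp only at hct
        have hv0 : padicValNat p ((c : ℕ+) : ℕ) ≠ 0 := by
          intro h0; apply hg; simp [h0]
        have hdvd : (p : ℕ) ∣ (c : ℕ) :=
          dvd_of_one_le_padicValNat (Nat.one_le_iff_ne_zero.mpr hv0)
        have hdvd' : p ∣ c := by
          obtain ⟨k, hk⟩ := hdvd
          have hk0 : k ≠ 0 := by rintro rfl; simp at hk
          exact ⟨⟨k, Nat.pos_of_ne_zero hk0⟩, by rw [← PNat.coe_inj]; simp [hk]; rfl⟩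
        obtain ⟨k, hk⟩ := hdvd'
        have hck : k * p = c := by rw [hk, mul_comm]
        refine ⟨(k, d), ?_, ?_, ?_⟩
        · rw [mem_factFin]
          simp only
          have : k * d * p = n * p := by
            rw [mul_right_comm, hck, hct]
          exact mul_right_cancel this
        · intro h0; apply hg
          simp only [← hck, ← smul_mul_assoc]
          exact h0
        · simp only
          rw [hck]
      · rintro ⟨a, b⟩ _ _
        exact smul_mul_assoc _ _ _
    have key2 : ∑ q ∈ (factFin n).toFinset,
        α q.1 * ((padicValNat p ((q.2 * p : ℕ+) : ℕ)) • β (q.2 * p))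
        = ∑ q ∈ (factFin (n * p)).toFinset,
        (padicValNat p ((q.2 : ℕ+) : ℕ)) • (α q.1 * β q.2) := by
      refine Finset.sum_bij_ne_zero (fun q _ _ => (q.1, q.2 * p)) ?_ ?_ ?_ ?_
      · rintro ⟨a, b⟩ h1 h2
        rw [mem_factFin] at h1 ⊢
        simp only at h1 ⊢
        rw [← mul_assoc, h1]
      · rintro ⟨a1, b1⟩ _ _ ⟨a2, b2⟩ _ _ h
        simp only [Prod.mk.injEq] at h ⊢
        exact ⟨h.1, mul_right_cancel h.2⟩
      · rintro ⟨c, d⟩ hct hg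
        rw [mem_factFin] at hct
        simp only at hct
        have hv0 : padicValNat p ((d : ℕ+) : ℕ) ≠ 0 := by
          intro h0; apply hg; simp [h0]
        have hdvd : (p : ℕ) ∣ (d : ℕ) :=
          dvd_of_one_le_padicValNat (Nat.one_le_iff_ne_zero.mpr hv0)
        have hdvd' : p ∣ d := by
          obtain ⟨k, hk⟩ := hdvd
          have hk0 : k ≠ 0 := by rintro rfl; simp at hk
          exact ⟨⟨k, Nat.pos_of_ne_zero hk0⟩, by rw [← PNat.coe_inj]; simp [hk]; rfl⟩
        obtain ⟨k, hk⟩ := hdvd'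
        have hck : k * p = d := by rw [hk, mul_comm]
        refine ⟨(c, k), ?_, ?_, ?_⟩
        · rw [mem_factFin]
          simp only
          have : c * k * p = n * p := by
            rw [mul_assoc, hck, hct]
          exact mul_right_cancel this
        · intro h0; apply hg
          simp only [← hck, ← mul_smul_comm]
          exact h0
        · simp only
          rw [hck]
      · rintro ⟨a, b⟩ _ _
        exact mul_smul_comm _ _ _
    have key3 : ∀ q ∈ (factFin (n * p)).toFinset,
        (padicValNat p ((q.1 : ℕ+) : ℕ)) • (α q.1 * β q.2)
        + (padicValNat p ((q.2 : ℕ+) : ℕ)) • (α q.1 * β q.2)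
        = v • (α q.1 * β q.2) := by
      rintro ⟨c, d⟩ hq
      rw [mem_factFin] at hq
      simp only at hq ⊢
      rw [← add_smul, hv, ← hq]
      congr 1
      rw [PNat.mul_coe, padicValNat.mul c.ne_zero d.ne_zero]
    calc ∑ q ∈ (factFin n).toFinset, D' (α q.1 * β q.2)
          + ∑ q ∈ (factFin (n * p)).toFinset, v • (α q.1 * β q.2)
        = (∑ q ∈ (factFin n).toFinset, (α q.1 * D (β q.2) + β q.2 * D (α q.1)))
          + ∑ q ∈ (factFin (n * p)).toFinset,
            ((padicValNat p ((q.1 : ℕ+) : ℕ)) • (α q.1 * β q.2)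
              + (padicValNat p ((q.2 : ℕ+) : ℕ)) • (α q.1 * β q.2)) := by
          rw [Finset.sum_congr rfl (fun q hq => hDleib (α q.1) (β q.2)),
            Finset.sum_congr rfl key3]
      _ = ∑ q ∈ (factFin n).toFinset,
            (D (α q.1) + (padicValNat p ((q.1 * p : ℕ+) : ℕ)) • α (q.1 * p)) * β q.2
          + ∑ q ∈ (factFin n).toFinset,
            α q.1 * (D (β q.2) + (padicValNat p ((q.2 * p : ℕ+) : ℕ)) • β (q.2 * p)) := by
          have hcomm : ∑ x ∈ (factFin n).toFinset, β x.2 * D (α x.1)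
              = ∑ x ∈ (factFin n).toFinset, D (α x.1) * β x.2 :=
            Finset.sum_congr rfl (fun q _ => mul_comm _ _)
          simp only [add_mul, mul_add, Finset.sum_add_distrib, key1, key2, hcomm]
          abel
      _ = _ := rfl
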